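/- For every K > 0 there exist constants c > 0, ε₀ ∈ (0,1) and n₀ such that the following holds for every n = 2^k ≥ n₀ and every ε ∈ (0, ε₀): every linear algebraic algorithm that is (1 + Kε)-well conditioned and computes the Fourier ε-perturbation Id + εF makes at least c ε² n log₂ n steps. -/

import Mathlib

open Matrix Finset

noncomputable section

/-- Walsh–Hadamard matrix of size `2^k`. -/
def WH (k : ℕ) : Matrix (Fin (2^k)) (Fin (2^k)) ℝ := fun i j =>
  ((-1 : ℝ) ^ (∑ b ∈ Finset.range k, ((i.val >>> b) % 2) * ((j.val >>> b) % 2))) /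
    Real.sqrt (2^k)

/-- Quasi-entropy `Φ(M)` (base-2 logs, `0·log 0 = 0`). -/
def qent {n : ℕ} (M : Matrix (Fin n) (Fin n) ℝ) : ℝ :=
  -∑ i, ∑ j, (M i j * M⁻¹ᵀ i j) * Real.logb 2 |M i j * M⁻¹ᵀ i j|

/-- Preconditioned quasi-entropy `Φ_{A,B}(M)`. -/
def qentP {n : ℕ} (A B M : Matrix (Fin n) (Fin n) ℝ) : ℝ :=
  -∑ i, ∑ j, ((M * A) i j * (M⁻¹ᵀ * B) i j) * Real.logb 2 |(M * A) i j * (M⁻¹ᵀ * B) i j|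

/-- Summand of the paired potential. -/
def pairS {n : ℕ} (P Q : Matrix (Fin n) (Fin n ⊕ Fin n) ℝ)
    (M : Matrix (Fin n) (Fin n) ℝ) (i j : Fin n) : ℝ :=
  (M * P) i (Sum.inl j) * (M⁻¹ᵀ * Q) i (Sum.inl j) +
    (M * P) i (Sum.inr j) * (M⁻¹ᵀ * Q) i (Sum.inr j)

/-- Paired potential `Φ̂_{P,Q}(M)` for preconditioners `P Q : n × 2n`. -/
def pairedPot {n : ℕ} (P Q : Matrix (Fin n) (Fin n ⊕ Fin n) ℝ)
    (M : Matrix (Fin n) (Fin n) ℝ) : ℝ :=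
  -∑ i, ∑ j, pairS P Q M i j * Real.logb 2 |pairS P Q M i j|

/-- Planar rotation matrix `R_{i,i',θ}`. -/
def rotMat {n : ℕ} (i i' : Fin n) (θ : ℝ) : Matrix (Fin n) (Fin n) ℝ :=
  Matrix.of fun a b =>
    if a = i ∧ b = i then Real.cos θ
    else if a = i ∧ b = i' then Real.sin θ
    else if a = i' ∧ b = i then -Real.sin θ
    else if a = i' ∧ b = i' then Real.cos θ
    else if a = b then 1 else 0

/-- Spectral norm (ℓ₂ operator norm) of a square real matrix. -/
def specNorm {n : ℕ} (M : Matrix (Fin n) (Fin n) ℝ) : ℝ :=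
  ‖LinearMap.toContinuousLinearMap (Matrix.toEuclideanLin M)‖

/-- Condition number `κ(M) = ‖M‖₂ ‖M⁻¹‖₂`. -/
def condNum {n : ℕ} (M : Matrix (Fin n) (Fin n) ℝ) : ℝ :=
  specNorm M * specNorm M⁻¹

/-- Singular values: square roots of eigenvalues of `Mᴴ M` (= `Mᵀ M` over ℝ). -/
def singVals {n : ℕ} (M : Matrix (Fin n) (Fin n) ℝ) (i : Fin n) : ℝ :=
  Real.sqrt ((Matrix.isHermitian_conjTranspose_mul_self M).eigenvalues i)

/-- Rotation step of the linear algebraic model. -/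
def IsRotStep {n : ℕ} (M M' : Matrix (Fin n) (Fin n) ℝ) : Prop :=
  ∃ (i i' : Fin n) (θ : ℝ), i < i' ∧ M' = rotMat i i' θ * M

/-- Constant gate: one row is multiplied by a nonzero constant. -/
def IsConstGate {n : ℕ} (M M' : Matrix (Fin n) (Fin n) ℝ) : Prop :=
  ∃ (r : Fin n) (c : ℝ), c ≠ 0 ∧ M' = Matrix.updateRow M r (c • M r)

/-- A single step of a linear algebraic algorithm. -/
def IsStep {n : ℕ} (M M' : Matrix (Fin n) (Fin n) ℝ) : Prop :=
  IsRotStep M M' ∨ IsConstGate M M'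

/-- `A` is an `m`-step linear algebraic algorithm. -/
def IsAlgorithm {n : ℕ} (m : ℕ) (A : ℕ → Matrix (Fin n) (Fin n) ℝ) : Prop :=
  A 0 = 1 ∧ ∀ t < m, IsStep (A t) (A (t+1))

/-- The algorithm is uniformly `κ`-well conditioned. -/
def WellConditioned {n : ℕ} (m : ℕ) (A : ℕ → Matrix (Fin n) (Fin n) ℝ) (κ : ℝ) : Prop :=
  ∀ t ≤ m, IsUnit (A t).det ∧ condNum (A t) ≤ κ

end


section AuxProof

noncomputable def nl (x : ℝ) : ℝ := x * Real.log x

lemma nl_zero : nl 0 = 0 := by simp [nl]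
lemma nl_neg (x : ℝ) : nl (-x) = - nl x := by simp [nl, Real.log_neg_eq_log]

/-- difference functional -/
noncomputable def Gd (a b : ℝ) : ℝ := nl (a+b) - nl a - nl b

lemma Gd_comm (a b : ℝ) : Gd a b = Gd b a := by rw [Gd, Gd, add_comm]; ring

lemma Gd_neg (a b : ℝ) : Gd (-a) (-b) = - Gd a b := by
  rw [Gd, Gd, show -a + -b = -(a+b) by ring, nl_neg, nl_neg, nl_neg]; ring

lemma Gd_flip (a b : ℝ) : Gd a b = - Gd (a+b) (-b) := by
  have : (a+b) + (-b) = a := by ring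
  simp [Gd, this, nl_neg]; ring

lemma Gd_pos {a b : ℝ} (ha : 0 ≤ a) (hb : 0 ≤ b) : 0 ≤ Gd a b ∧ Gd a b ≤ a + b := by
  rcases eq_or_lt_of_le ha with h0 | ha'
  · constructor <;> simp [Gd, ← h0, nl_zero] <;> linarith
  rcases eq_or_lt_of_le hb with h0 | hb'
  · constructor <;> simp [Gd, ← h0, nl_zero] <;> linarith
  constructor
  · have h1 : Real.log a ≤ Real.log (a+b) := Real.log_le_log ha' (by linarith)
    have h2 : Real.log b ≤ Real.log (a+b) := Real.log_le_log hb' (by linarith)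
    have : a * Real.log a + b * Real.log b ≤ (a+b) * Real.log (a+b) := by nlinarith
    simp only [Gd, nl]; linarith
  · have h1 : Real.log ((a+b)/a) ≤ (a+b)/a - 1 := Real.log_le_sub_one_of_pos (by positivity)
    have h2 : Real.log ((a+b)/b) ≤ (a+b)/b - 1 := Real.log_le_sub_one_of_pos (by positivity)
    have e1 : Real.log ((a+b)/a) = Real.log (a+b) - Real.log a := Real.log_div (by linarith) (ne_of_gt ha')
    have e2 : Real.log ((a+b)/b) = Real.log (a+b) - Real.log b := Real.log_div (by linarith) (ne_of_gt hb')
    have f1 : a * (Real.log (a+b) - Real.log a) ≤ b := by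
      have h3 := mul_le_mul_of_nonneg_left h1 (le_of_lt ha')
      rw [e1] at h3
      calc a * (Real.log (a+b) - Real.log a) ≤ a * ((a+b)/a - 1) := h3
        _ = b := by field_simp; ring
    have f2 : b * (Real.log (a+b) - Real.log b) ≤ a := by
      have h3 := mul_le_mul_of_nonneg_left h2 (le_of_lt hb')
      rw [e2] at h3
      calc b * (Real.log (a+b) - Real.log b) ≤ b * ((a+b)/b - 1) := h3
        _ = a := by field_simp; ring
    simp only [Gd, nl]; nlinarith

lemma Gd_abs_pos {a b : ℝ} (ha : 0 ≤ a) (hb : 0 ≤ b) : |Gd a b| ≤ a + b := by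
  rcases Gd_pos ha hb with ⟨h1, h2⟩
  rw [abs_of_nonneg h1]; exact h2

/-- mixed case with nonnegative sum -/
lemma Gd_mix {a b : ℝ} (ha : 0 ≤ a) (hb : b ≤ 0) (hs : 0 ≤ a + b) : |Gd a b| ≤ |a| + |b| := by
  rw [Gd_flip a b]
  have := Gd_abs_pos hs (neg_nonneg.mpr hb)
  rw [abs_neg]
  calc |Gd (a+b) (-b)| ≤ (a+b) + (-b) := this
    _ = a := by ring
    _ ≤ |a| + |b| := by rw [abs_of_nonneg ha]; linarith [abs_nonneg b]

lemma Gd_abs (a b : ℝ) : |Gd a b| ≤ |a| + |b| := by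
  have main : ∀ x y : ℝ, 0 ≤ x → y ≤ 0 → |Gd x y| ≤ |x| + |y| := by
    intro x y hx hy
    rcases le_or_gt 0 (x + y) with hs | hs
    · exact Gd_mix hx hy hs
    · have h1 : |Gd x y| = |Gd (-y) (-x)| := by
        rw [Gd_comm (-y) (-x), Gd_neg, abs_neg]
      rw [h1]
      have := Gd_mix (a := -y) (b := -x) (by linarith) (by linarith) (by linarith)
      calc |Gd (-y) (-x)| ≤ |-y| + |-x| := this
        _ = |x| + |y| := by rw [abs_neg, abs_neg]; ring
  rcases le_or_gt 0 a with ha | ha <;> rcases le_or_gt 0 b with hb | hb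
  · rw [abs_of_nonneg ha, abs_of_nonneg hb]; exact Gd_abs_pos ha hb
  · exact main a b ha hb.le
  · rw [Gd_comm]; rw [add_comm (|a|) (|b|)]; exact main b a hb ha.le
  · have h1 : |Gd a b| = |Gd (-a) (-b)| := by rw [Gd_neg, abs_neg]
    rw [h1]
    calc |Gd (-a) (-b)| ≤ |-a| + |-b| := by
          rw [abs_of_nonneg (by linarith : (0:ℝ) ≤ -a), abs_of_nonneg (by linarith : (0:ℝ) ≤ -b)]
          exact Gd_abs_pos (by linarith) (by linarith)
      _ = |a| + |b| := by rw [abs_neg, abs_neg]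

/-- the 4-term version used per coordinate -/
lemma four_term (a b a' b' : ℝ) (h : a' + b' = a + b) :
    |nl a' + nl b' - nl a - nl b| ≤ |a| + |b| + |a'| + |b'| := by
  have : nl a' + nl b' - nl a - nl b = Gd a b - Gd a' b' := by
    rw [Gd, Gd, h]; ring
  rw [this]
  calc |Gd a b - Gd a' b'| ≤ |Gd a b| + |Gd a' b'| := abs_sub (Gd a b) (Gd a' b')
    _ ≤ (|a| + |b|) + (|a'| + |b'|) := add_le_add (Gd_abs a b) (Gd_abs a' b')
    _ = |a| + |b| + |a'| + |b'| := by ring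

lemma specNorm_nonneg {n : ℕ} (M : Matrix (Fin n) (Fin n) ℝ) : 0 ≤ specNorm M :=
  norm_nonneg _

lemma mulVec_sq_bound {n : ℕ} (M : Matrix (Fin n) (Fin n) ℝ) (x : Fin n → ℝ) :
    Real.sqrt (∑ i, (M.mulVec x i)^2) ≤ specNorm M * Real.sqrt (∑ i, (x i)^2) := by
  set v : EuclideanSpace ℝ (Fin n) := (WithLp.equiv 2 (Fin n → ℝ)).symm x with hv
  have h1 : Matrix.toEuclideanLin M v = (WithLp.equiv 2 (Fin n → ℝ)).symm (M.mulVec x) :=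
    Matrix.toEuclideanLin_apply_piLp_toLp M x
  have h2 : ‖LinearMap.toContinuousLinearMap (Matrix.toEuclideanLin M) v‖ ≤ specNorm M * ‖v‖ :=
    (LinearMap.toContinuousLinearMap (Matrix.toEuclideanLin M)).le_opNorm v
  rw [LinearMap.coe_toContinuousLinearMap'] at h2
  rw [h1] at h2
  have e1 : ‖(WithLp.equiv 2 (Fin n → ℝ)).symm (M.mulVec x)‖ = Real.sqrt (∑ i, (M.mulVec x i)^2) := by
    rw [EuclideanSpace.norm_eq]
    congr 1; apply Finset.sum_congr rfl; intro i _
    rw [WithLp.equiv_symm_apply, PiLp.toLp_apply]; rw [Real.norm_eq_abs, sq_abs]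
  have e2 : ‖v‖ = Real.sqrt (∑ i, (x i)^2) := by
    rw [hv, EuclideanSpace.norm_eq]
    congr 1; apply Finset.sum_congr rfl; intro i _
    rw [WithLp.equiv_symm_apply, PiLp.toLp_apply]; rw [Real.norm_eq_abs, sq_abs]
  rw [e1, e2] at h2; exact h2

lemma row_norm_le {n : ℕ} (M : Matrix (Fin n) (Fin n) ℝ) (a : Fin n) :
    Real.sqrt (∑ j, (M a j)^2) ≤ specNorm M := by
  set S : ℝ := ∑ j, (M a j)^2 with hS
  have hS0 : 0 ≤ S := Finset.sum_nonneg fun j _ => sq_nonneg _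
  rcases eq_or_lt_of_le hS0 with h0 | hpos
  · rw [← h0, Real.sqrt_zero]; exact specNorm_nonneg M
  have key : S ≤ specNorm M * Real.sqrt S := by
    have h1 : M.mulVec (fun j => M a j) a = S := by
      simp [Matrix.mulVec, dotProduct, hS, sq]
    have h2 : |M.mulVec (fun j => M a j) a| ≤ Real.sqrt (∑ i, (M.mulVec (fun j => M a j) i)^2) := by
      rw [← Real.sqrt_sq_eq_abs]
      apply Real.sqrt_le_sqrt
      exact Finset.single_le_sum (f := fun i => (M.mulVec (fun j => M a j) i)^2)
        (fun i _ => sq_nonneg _) (Finset.mem_univ a)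
    have h3 := mulVec_sq_bound M (fun j => M a j)
    calc S = |M.mulVec (fun j => M a j) a| := by rw [h1, abs_of_nonneg hS0]
      _ ≤ Real.sqrt (∑ i, (M.mulVec (fun j => M a j) i)^2) := h2
      _ ≤ specNorm M * Real.sqrt S := h3
  have hs : 0 < Real.sqrt S := Real.sqrt_pos.mpr hpos
  have : Real.sqrt S * Real.sqrt S ≤ specNorm M * Real.sqrt S := by
    rw [Real.mul_self_sqrt hS0]; exact key
  exact le_of_mul_le_mul_right this hs

lemma col_norm_le {n : ℕ} (B : Matrix (Fin n) (Fin n) ℝ) (a : Fin n) :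
    Real.sqrt (∑ j, (B j a)^2) ≤ specNorm B := by
  have h1 : ∀ j, B.mulVec (Pi.single a 1) j = B j a := by
    intro j; simp [Matrix.mulVec, dotProduct, Pi.single_apply]
  have h3 := mulVec_sq_bound B (Pi.single a 1)
  have e1 : ∑ i, (B.mulVec (Pi.single a 1) i)^2 = ∑ j, (B j a)^2 := by
    apply Finset.sum_congr rfl; intro i _; rw [h1]
  have e2 : ∑ i, ((Pi.single a 1 : Fin n → ℝ) i)^2 = 1 := by
    simp [Pi.single_apply]
  rw [e1, e2, Real.sqrt_one, mul_one] at h3; exact h3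

/-- key ℓ1 bound for rows of M ∘ M⁻ᵀ -/
lemma row_l1_bound {n : ℕ} (M : Matrix (Fin n) (Fin n) ℝ) (a : Fin n) :
    ∑ j, |M a j * (M⁻¹)ᵀ a j| ≤ condNum M := by
  have cs := Finset.sum_mul_sq_le_sq_mul_sq Finset.univ (fun j => |M a j|) (fun j => |(M⁻¹)ᵀ a j|)
  have e0 : ∀ j, |M a j * (M⁻¹)ᵀ a j| = |M a j| * |(M⁻¹)ᵀ a j| := fun j => abs_mul _ _
  have hnn : (0:ℝ) ≤ ∑ j, |M a j| * |(M⁻¹)ᵀ a j| :=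
    Finset.sum_nonneg fun j _ => mul_nonneg (abs_nonneg _) (abs_nonneg _)
  have hle : ∑ j, |M a j| * |(M⁻¹)ᵀ a j| ≤
      Real.sqrt (∑ j, (M a j)^2) * Real.sqrt (∑ j, ((M⁻¹)ᵀ a j)^2) := by
    have h2 : (∑ j, |M a j| * |(M⁻¹)ᵀ a j|)^2 ≤ (∑ j, (M a j)^2) * (∑ j, ((M⁻¹)ᵀ a j)^2) := by
      have : ∀ j, |M a j|^2 = (M a j)^2 := fun j => sq_abs _
      have h' : ∀ j, |(M⁻¹)ᵀ a j|^2 = ((M⁻¹)ᵀ a j)^2 := fun j => sq_abs _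
      calc (∑ j, |M a j| * |(M⁻¹)ᵀ a j|)^2 ≤ (∑ j, |M a j|^2) * (∑ j, |(M⁻¹)ᵀ a j|^2) := cs
        _ = (∑ j, (M a j)^2) * (∑ j, ((M⁻¹)ᵀ a j)^2) := by
            congr 1 <;> (apply Finset.sum_congr rfl; intro j _; rw [sq_abs])
    calc ∑ j, |M a j| * |(M⁻¹)ᵀ a j|
        = Real.sqrt ((∑ j, |M a j| * |(M⁻¹)ᵀ a j|)^2) := (Real.sqrt_sq hnn).symm
      _ ≤ Real.sqrt ((∑ j, (M a j)^2) * (∑ j, ((M⁻¹)ᵀ a j)^2)) := Real.sqrt_le_sqrt h2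
      _ = Real.sqrt (∑ j, (M a j)^2) * Real.sqrt (∑ j, ((M⁻¹)ᵀ a j)^2) := Real.sqrt_mul
            (Finset.sum_nonneg fun j _ => sq_nonneg _) _
  have hrow := row_norm_le M a
  have hcol : Real.sqrt (∑ j, ((M⁻¹)ᵀ a j)^2) ≤ specNorm M⁻¹ := by
    have : ∀ j, (M⁻¹)ᵀ a j = M⁻¹ j a := fun j => rfl
    simpa [Matrix.transpose_apply] using col_norm_le (M⁻¹) a
  calc ∑ j, |M a j * (M⁻¹)ᵀ a j| = ∑ j, |M a j| * |(M⁻¹)ᵀ a j| := by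
        apply Finset.sum_congr rfl; intro j _; exact e0 j
    _ ≤ Real.sqrt (∑ j, (M a j)^2) * Real.sqrt (∑ j, ((M⁻¹)ᵀ a j)^2) := hle
    _ ≤ specNorm M * specNorm M⁻¹ := by
        apply mul_le_mul hrow hcol (Real.sqrt_nonneg _) (specNorm_nonneg M)
    _ = condNum M := rfl

lemma sum_eq_pair {n : ℕ} {i i' : Fin n} (hne : i ≠ i') (g : Fin n → ℝ)
    (h : ∀ c, c ≠ i → c ≠ i' → g c = 0) : ∑ c, g c = g i + g i' := by
  have h1 : ∑ c ∈ ({i, i'} : Finset (Fin n)), g c = ∑ c, g c := by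
    apply Finset.sum_subset (Finset.subset_univ _)
    intro c _ hc
    simp only [Finset.mem_insert, Finset.mem_singleton] at hc
    push_neg at hc
    exact h c hc.1 hc.2
  rw [← h1, Finset.sum_pair hne]

section rot
variable {n : ℕ} {i i' : Fin n}

lemma rot_apply_ii (θ : ℝ) : rotMat i i' θ i i = Real.cos θ := by simp [rotMat]
lemma rot_apply_ii' (hne : i ≠ i') (θ : ℝ) : rotMat i i' θ i i' = Real.sin θ := by
  simp [rotMat, hne, Ne.symm hne]
lemma rot_apply_i'i (hne : i ≠ i') (θ : ℝ) : rotMat i i' θ i' i = -Real.sin θ := by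
  simp [rotMat, hne, Ne.symm hne]
lemma rot_apply_i'i' (hne : i ≠ i') (θ : ℝ) : rotMat i i' θ i' i' = Real.cos θ := by
  simp [rotMat, hne, Ne.symm hne]
lemma rot_apply_row_other (θ : ℝ) {a b : Fin n} (ha : a ≠ i) (ha' : a ≠ i') :
    rotMat i i' θ a b = if a = b then 1 else 0 := by simp [rotMat, ha, ha']
lemma rot_apply_other_zero (θ : ℝ) {a c : Fin n} (hc : c ≠ i) (hc' : c ≠ i') (hac : a ≠ c) :
    rotMat i i' θ a c = 0 := by
  simp only [rotMat, Matrix.of_apply]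
  rw [if_neg (fun h => hc h.2), if_neg (fun h => hc' h.2), if_neg (fun h => hc h.2),
    if_neg (fun h => hc' h.2), if_neg hac]

lemma rot_row_i (hne : i ≠ i') (θ : ℝ) (M : Matrix (Fin n) (Fin n) ℝ) (j : Fin n) :
    (rotMat i i' θ * M) i j = Real.cos θ * M i j + Real.sin θ * M i' j := by
  rw [Matrix.mul_apply]
  rw [sum_eq_pair hne (fun c => rotMat i i' θ i c * M c j)
    (fun c hc hc' => by
      show rotMat i i' θ i c * M c j = 0
      rw [rot_apply_other_zero θ hc hc' (Ne.symm hc), zero_mul])]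
  show rotMat i i' θ i i * M i j + rotMat i i' θ i i' * M i' j = _
  rw [rot_apply_ii, rot_apply_ii' hne]

lemma rot_row_i' (hne : i ≠ i') (θ : ℝ) (M : Matrix (Fin n) (Fin n) ℝ) (j : Fin n) :
    (rotMat i i' θ * M) i' j = -Real.sin θ * M i j + Real.cos θ * M i' j := by
  rw [Matrix.mul_apply]
  rw [sum_eq_pair hne (fun c => rotMat i i' θ i' c * M c j)
    (fun c hc hc' => by
      show rotMat i i' θ i' c * M c j = 0
      rw [rot_apply_other_zero θ hc hc' (Ne.symm hc'), zero_mul])]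
  show rotMat i i' θ i' i * M i j + rotMat i i' θ i' i' * M i' j = _
  rw [rot_apply_i'i hne, rot_apply_i'i' hne]

lemma rot_row_other (θ : ℝ) (M : Matrix (Fin n) (Fin n) ℝ) {a : Fin n} (ha : a ≠ i) (ha' : a ≠ i')
    (j : Fin n) : (rotMat i i' θ * M) a j = M a j := by
  rw [Matrix.mul_apply]
  have h : ∀ c, c ≠ a → rotMat i i' θ a c * M c j = 0 := by
    intro c hc
    rw [rot_apply_row_other θ ha ha', if_neg (fun h => hc h.symm), zero_mul]
  rw [Finset.sum_eq_single a (fun c _ hc => h c hc) (by intro h; exact absurd (Finset.mem_univ a) h)]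
  rw [rot_apply_row_other θ ha ha', if_pos rfl, one_mul]
end rot

lemma rot_transpose {n : ℕ} {i i' : Fin n} (hne : i ≠ i') (θ : ℝ) :
    (rotMat i i' θ)ᵀ = rotMat i i' (-θ) := by
  ext a b
  rw [Matrix.transpose_apply]
  by_cases hai : a = i <;> by_cases hai' : a = i' <;>
    by_cases hbi : b = i <;> by_cases hbi' : b = i' <;>
    simp_all [rotMat, Real.cos_neg, Real.sin_neg, Ne.symm hne, eq_comm]

lemma rot_mul_rot {n : ℕ} {i i' : Fin n} (hne : i ≠ i') (θ θ' : ℝ) :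
    rotMat i i' θ * rotMat i i' θ' = rotMat i i' (θ + θ') := by
  ext a b
  by_cases hai : a = i
  · rw [hai, rot_row_i hne]
    by_cases hbi : b = i
    · rw [hbi, rot_apply_ii, rot_apply_ii, rot_apply_i'i hne, Real.cos_add]; ring
    by_cases hbi' : b = i'
    · rw [hbi', rot_apply_ii' hne, rot_apply_ii' hne, rot_apply_i'i' hne, Real.sin_add]; ring
    · rw [rot_apply_other_zero θ' hbi hbi' (fun h => hbi h.symm),
        rot_apply_other_zero θ' hbi hbi' (fun h => hbi' h.symm),
        rot_apply_other_zero (θ+θ') hbi hbi' (fun h => hbi h.symm)]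
      ring
  by_cases hai' : a = i'
  · rw [hai', rot_row_i' hne]
    by_cases hbi : b = i
    · rw [hbi, rot_apply_ii, rot_apply_i'i hne, rot_apply_i'i hne, Real.sin_add]; ring
    by_cases hbi' : b = i'
    · rw [hbi', rot_apply_ii' hne, rot_apply_i'i' hne, rot_apply_i'i' hne, Real.cos_add]; ring
    · rw [rot_apply_other_zero θ' hbi hbi' (fun h => hbi h.symm),
        rot_apply_other_zero θ' hbi hbi' (fun h => hbi' h.symm),
        rot_apply_other_zero (θ+θ') hbi hbi' (fun h => hbi' h.symm)]
      ring
  · rw [rot_row_other θ _ hai hai', rot_apply_row_other θ' hai hai',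
      rot_apply_row_other (θ+θ') hai hai']

lemma rot_zero {n : ℕ} {i i' : Fin n} (hne : i ≠ i') : rotMat i i' 0 = 1 := by
  ext a b
  by_cases hai : a = i
  · by_cases hbi : b = i
    · rw [hai, hbi, rot_apply_ii, Real.cos_zero, Matrix.one_apply_eq]
    by_cases hbi' : b = i'
    · rw [hai, hbi', rot_apply_ii' hne, Real.sin_zero,
        Matrix.one_apply_ne hne]
    · rw [hai, rot_apply_other_zero 0 hbi hbi' (fun h => hbi h.symm),
        Matrix.one_apply_ne (fun h => hbi h.symm)]
  by_cases hai' : a = i'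
  · by_cases hbi : b = i
    · rw [hai', hbi, rot_apply_i'i hne, Real.sin_zero, neg_zero,
        Matrix.one_apply_ne (Ne.symm hne)]
    by_cases hbi' : b = i'
    · rw [hai', hbi', rot_apply_i'i' hne, Real.cos_zero, Matrix.one_apply_eq]
    · rw [hai', rot_apply_other_zero 0 hbi hbi' (fun h => hbi' h.symm),
        Matrix.one_apply_ne (fun h => hbi' h.symm)]
  · rw [rot_apply_row_other 0 hai hai', Matrix.one_apply]

lemma rot_mul_rot_neg {n : ℕ} {i i' : Fin n} (hne : i ≠ i') (θ : ℝ) :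
    rotMat i i' θ * rotMat i i' (-θ) = 1 := by
  rw [rot_mul_rot hne, add_neg_cancel, rot_zero hne]

lemma two_pow_sum_lt (b : ℕ) (f : ℕ → ℕ) (hf : ∀ i, f i ≤ 1) :
    ∑ i ∈ Finset.range b, f i * 2^i < 2^b := by
  induction b with
  | zero => simp
  | succ b ih =>
    rw [Finset.sum_range_succ, pow_succ]
    have h1 : f b * 2^b ≤ 2^b := by
      calc f b * 2^b ≤ 1 * 2^b := Nat.mul_le_mul_right _ (hf b)
        _ = 2^b := one_mul _
    omega

lemma digit_sum (k : ℕ) (f : ℕ → ℕ) (hf : ∀ i, f i ≤ 1) (b : ℕ) (hb : b < k) :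
    (∑ i ∈ Finset.range k, f i * 2^i) / 2^b % 2 = f b := by
  have hsplit : Finset.range k = Finset.range (b+1) ∪ Finset.Ico (b+1) k := by
    rw [Finset.range_eq_Ico, Finset.range_eq_Ico]
    exact (Finset.Ico_union_Ico_eq_Ico (Nat.zero_le _) (by omega : b+1 ≤ k)).symm
  have hdisj : Disjoint (Finset.range (b+1)) (Finset.Ico (b+1) k) := by
    simp [Finset.disjoint_left, Finset.mem_range, Finset.mem_Ico]
    omega
  rw [hsplit, Finset.sum_union hdisj, Finset.sum_range_succ]
  have hdvd : (2:ℕ)^(b+1) ∣ ∑ i ∈ Finset.Ico (b+1) k, f i * 2^i := by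
    apply Finset.dvd_sum
    intro i hi
    rw [Finset.mem_Ico] at hi
    exact Dvd.dvd.mul_left (pow_dvd_pow 2 hi.1) _
  obtain ⟨D, hD⟩ := hdvd
  rw [hD]
  have hA := two_pow_sum_lt b f hf
  have e1 : ∑ i ∈ Finset.range b, f i * 2^i + f b * 2^b + 2^(b+1) * D
      = (∑ i ∈ Finset.range b, f i * 2^i) + 2^b * (f b + 2 * D) := by
    rw [pow_succ]; ring
  rw [e1, Nat.add_mul_div_left _ _ (by positivity),
    Nat.div_eq_of_lt hA, zero_add]
  rw [Nat.add_mul_mod_self_left]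
  exact Nat.mod_eq_of_lt (by have := hf b; omega)

lemma bit_finFun (k : ℕ) (f : Fin k → Fin 2) (b : Fin k) :
    ((finFunctionFinEquiv f : Fin (2^k)).val >>> b.val) % 2 = (f b).val := by
  rw [Nat.shiftRight_eq_div_pow]
  have h1 : (finFunctionFinEquiv f : Fin (2^k)).val = ∑ i : Fin k, (f i).val * 2^(i:ℕ) :=
    finFunctionFinEquiv_apply f
  rw [h1]
  have h2 : ∑ i : Fin k, (f i).val * 2^(i:ℕ)
      = ∑ i ∈ Finset.range k, (fun i => if h : i < k then (f ⟨i,h⟩).val else 0) i * 2^i := by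
    rw [Finset.sum_range]
    apply Finset.sum_congr rfl
    intro i _
    simp [i.isLt]
  rw [h2, digit_sum k _ (fun i => by split <;> simp [Fin.is_le]) b.val b.isLt]
  simp [b.isLt]

lemma WH_sym (k : ℕ) : (WH k)ᵀ = WH k := by
  ext i j
  rw [Matrix.transpose_apply, WH, WH]
  congr 2
  exact Finset.sum_congr rfl fun b _ => mul_comm _ _

lemma sqrt_two_pow_sq (k : ℕ) : Real.sqrt (2^k) * Real.sqrt (2^k) = 2^k :=
  Real.mul_self_sqrt (by positivity)

/-- exponent notation -/
noncomputable def whExp (k : ℕ) (i j : Fin (2^k)) : ℕ :=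
  ∑ b ∈ Finset.range k, ((i.val >>> b) % 2) * ((j.val >>> b) % 2)

lemma WH_eq (k : ℕ) (i j : Fin (2^k)) : WH k i j = (-1:ℝ)^(whExp k i j) / Real.sqrt (2^k) := rfl

lemma bit_eq_symm (k : ℕ) (i : Fin (2^k)) (b : Fin k) :
    (i.val >>> b.val) % 2 = ((finFunctionFinEquiv.symm i : Fin k → Fin 2) b).val := by
  have := bit_finFun k (finFunctionFinEquiv.symm i) b
  rwa [Equiv.apply_symm_apply] at this

lemma WH_mul_self (k : ℕ) : WH k * WH k = 1 := by
  ext i j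
  rw [Matrix.mul_apply]
  have hentry : ∀ l, WH k i l * WH k l j
      = (-1:ℝ)^(whExp k i l + whExp k l j) / (2^k : ℝ) := by
    intro l
    rw [WH_eq, WH_eq, div_mul_div_comm, sqrt_two_pow_sq, pow_add]
  rw [Finset.sum_congr rfl (fun l _ => hentry l), ← Finset.sum_div]
  -- reindex the sum
  have hre : ∑ l, (-1:ℝ)^(whExp k i l + whExp k l j)
      = ∑ f : Fin k → Fin 2, (-1:ℝ)^(whExp k i (finFunctionFinEquiv f) + whExp k (finFunctionFinEquiv f) j) := by
    exact (Equiv.sum_comp finFunctionFinEquiv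
      (fun l => (-1:ℝ)^(whExp k i l + whExp k l j))).symm
  rw [hre]
  have hexp : ∀ f : Fin k → Fin 2,
      whExp k i (finFunctionFinEquiv f) + whExp k (finFunctionFinEquiv f) j
      = ∑ b : Fin k, (f b).val * (((i.val >>> b.val) % 2) + ((j.val >>> b.val) % 2)) := by
    intro f
    rw [whExp, whExp, ← Finset.sum_add_distrib, Finset.sum_range]
    apply Finset.sum_congr rfl
    intro b _
    rw [bit_finFun k f b]
    ring
  have hprod : ∀ f : Fin k → Fin 2, (-1:ℝ)^(whExp k i (finFunctionFinEquiv f) + whExp k (finFunctionFinEquiv f) j)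
      = ∏ b : Fin k, ((-1:ℝ)^((((i.val >>> b.val) % 2) + ((j.val >>> b.val) % 2)))) ^ (f b).val := by
    intro f
    rw [hexp f, ← Finset.prod_pow_eq_pow_sum]
    apply Finset.prod_congr rfl
    intro b _
    rw [← pow_mul, mul_comm]
  rw [Finset.sum_congr rfl (fun f _ => hprod f)]
  have key := Finset.prod_univ_sum (fun _ : Fin k => (Finset.univ : Finset (Fin 2)))
    (fun b v => ((-1:ℝ)^((((i.val >>> b.val) % 2) + ((j.val >>> b.val) % 2)))) ^ (v:ℕ))
  rw [← Fintype.piFinset_univ, ← key]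
  have hfactor : ∀ b : Fin k,
      ∑ v : Fin 2, ((-1:ℝ)^((((i.val >>> b.val) % 2) + ((j.val >>> b.val) % 2)))) ^ (v:ℕ)
      = 1 + (-1:ℝ)^((((i.val >>> b.val) % 2) + ((j.val >>> b.val) % 2))) := by
    intro b
    rw [Fin.sum_univ_two]
    simp
  rw [Finset.prod_congr rfl (fun b _ => hfactor b)]
  by_cases hij : i = j
  · subst hij
    have : ∀ b : Fin k, (1 + (-1:ℝ)^((((i.val >>> b.val) % 2) + ((i.val >>> b.val) % 2)))) = 2 := by
      intro b
      rw [← two_mul, pow_mul]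
      norm_num
    rw [Finset.prod_congr rfl (fun b _ => this b), Finset.prod_const, Matrix.one_apply_eq]
    simp [Finset.card_univ]
  · -- find differing bit
    have hne : finFunctionFinEquiv.symm i ≠ finFunctionFinEquiv.symm j := by
      intro h; exact hij (by simpa using congrArg finFunctionFinEquiv h)
    obtain ⟨b, hb⟩ := Function.ne_iff.mp hne
    have hbit : (i.val >>> b.val) % 2 ≠ (j.val >>> b.val) % 2 := by
      rw [bit_eq_symm k i b, bit_eq_symm k j b]
      exact fun h => hb (Fin.ext h)
    have hzero : (1 + (-1:ℝ)^((((i.val >>> b.val) % 2) + ((j.val >>> b.val) % 2)))) = 0 := by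
      have h1 : (i.val >>> b.val) % 2 < 2 := Nat.mod_lt _ (by norm_num)
      have h2 : (j.val >>> b.val) % 2 < 2 := Nat.mod_lt _ (by norm_num)
      have : (((i.val >>> b.val) % 2) + ((j.val >>> b.val) % 2)) = 1 := by omega
      rw [this]; norm_num
    rw [Finset.prod_eq_zero (Finset.mem_univ b) hzero, Matrix.one_apply_ne hij]
    norm_num

noncomputable def phi {n : ℕ} (M : Matrix (Fin n) (Fin n) ℝ) : ℝ :=
  ∑ i, ∑ j, nl (M i j * (M⁻¹)ᵀ i j)

lemma phi_one {n : ℕ} : phi (1 : Matrix (Fin n) (Fin n) ℝ) = 0 := by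
  rw [phi, inv_one, Matrix.transpose_one]
  apply Finset.sum_eq_zero; intro i _
  apply Finset.sum_eq_zero; intro j _
  by_cases h : i = j <;> simp [Matrix.one_apply, h, nl]

lemma phi_constGate {n : ℕ} {M M' : Matrix (Fin n) (Fin n) ℝ} (hM : IsUnit M.det)
    (h : IsConstGate M M') : phi M' = phi M := by
  obtain ⟨r, γ, hγ, rfl⟩ := h
  set f : Fin n → ℝ := fun i => if i = r then γ else 1 with hf
  have hfne : ∀ i, f i ≠ 0 := by intro i; by_cases hi : i = r <;> simp [hf, hi, hγ]
  have hDM : Matrix.updateRow M r (γ • M r) = Matrix.diagonal f * M := by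
    ext a b
    rw [Matrix.diagonal_mul]
    by_cases ha : a = r
    · subst ha; simp [hf]
    · simp [Matrix.updateRow_apply, ha, hf]
  have hinv : (Matrix.diagonal f * M)⁻¹ = M⁻¹ * Matrix.diagonal (fun i => (f i)⁻¹) := by
    apply Matrix.inv_eq_right_inv
    rw [Matrix.mul_assoc, ← Matrix.mul_assoc M, Matrix.mul_nonsing_inv M hM, Matrix.one_mul,
      Matrix.diagonal_mul_diagonal]
    have : (fun i => f i * (f i)⁻¹) = fun _ => (1:ℝ) := by
      funext i; exact mul_inv_cancel₀ (hfne i)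
    rw [this, Matrix.diagonal_one]
  rw [phi, phi, hDM, hinv]
  apply Finset.sum_congr rfl; intro a _
  apply Finset.sum_congr rfl; intro b _
  congr 1
  rw [Matrix.diagonal_mul, Matrix.transpose_apply, Matrix.mul_diagonal, Matrix.transpose_apply]
  have := hfne a
  field_simp

lemma phi_rot_bound {n : ℕ} {M : Matrix (Fin n) (Fin n) ℝ} {i i' : Fin n} (hne : i ≠ i')
    (θ : ℝ) (hM : IsUnit M.det) (hcM : condNum M ≤ 2)
    (hcM' : condNum (rotMat i i' θ * M) ≤ 2) :
    |phi (rotMat i i' θ * M) - phi M| ≤ 8 := by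
  set R := rotMat i i' θ with hR
  set M' := R * M with hM'
  set N : Matrix (Fin n) (Fin n) ℝ := (M⁻¹)ᵀ with hN
  have hinv : M'⁻¹ = M⁻¹ * rotMat i i' (-θ) := by
    apply Matrix.inv_eq_right_inv
    rw [hM', Matrix.mul_assoc, ← Matrix.mul_assoc M, Matrix.mul_nonsing_inv M hM,
      Matrix.one_mul, hR, rot_mul_rot_neg hne]
  have hN' : (M'⁻¹)ᵀ = R * N := by
    rw [hinv, Matrix.transpose_mul, rot_transpose hne, neg_neg, hN, hR]
  have hsum : ∀ j, M' i j * (M'⁻¹)ᵀ i j + M' i' j * (M'⁻¹)ᵀ i' j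
      = M i j * N i j + M i' j * N i' j := by
    intro j
    rw [hN', hM', hR, rot_row_i hne, rot_row_i' hne, rot_row_i hne, rot_row_i' hne]
    linear_combination (M i j * N i j + M i' j * N i' j) * (Real.sin_sq_add_cos_sq θ)
  have hrow_other : ∀ a, a ≠ i → a ≠ i' → ∀ j,
      nl (M' a j * (M'⁻¹)ᵀ a j) = nl (M a j * N a j) := by
    intro a ha ha' j
    rw [hN', hM', hR, rot_row_other θ M ha ha', rot_row_other θ N ha ha']
  have hsplit : phi M' - phi M
      = (∑ j, (nl (M' i j * (M'⁻¹)ᵀ i j) - nl (M i j * N i j)))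
        + (∑ j, (nl (M' i' j * (M'⁻¹)ᵀ i' j) - nl (M i' j * N i' j))) := by
    rw [phi, phi, ← Finset.sum_sub_distrib]
    rw [sum_eq_pair hne (fun a => (∑ j, nl (M' a j * (M'⁻¹)ᵀ a j)) - ∑ j, nl (M a j * (M⁻¹)ᵀ a j))
      (fun a ha ha' => by
        show (∑ j, nl (M' a j * (M'⁻¹)ᵀ a j)) - ∑ j, nl (M a j * (M⁻¹)ᵀ a j) = 0
        rw [sub_eq_zero]
        exact Finset.sum_congr rfl fun j _ => hrow_other a ha ha' j)]
    rw [← Finset.sum_sub_distrib, ← Finset.sum_sub_distrib]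
  rw [hsplit, ← Finset.sum_add_distrib]
  have hterm : ∀ j, (nl (M' i j * (M'⁻¹)ᵀ i j) - nl (M i j * N i j))
      + (nl (M' i' j * (M'⁻¹)ᵀ i' j) - nl (M i' j * N i' j))
      = nl (M' i j * (M'⁻¹)ᵀ i j) + nl (M' i' j * (M'⁻¹)ᵀ i' j)
        - nl (M i j * N i j) - nl (M i' j * N i' j) := by intro j; ring
  calc |∑ j, ((nl (M' i j * (M'⁻¹)ᵀ i j) - nl (M i j * N i j))
      + (nl (M' i' j * (M'⁻¹)ᵀ i' j) - nl (M i' j * N i' j)))|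
      ≤ ∑ j, |(nl (M' i j * (M'⁻¹)ᵀ i j) - nl (M i j * N i j))
        + (nl (M' i' j * (M'⁻¹)ᵀ i' j) - nl (M i' j * N i' j))| :=
        Finset.abs_sum_le_sum_abs _ _
    _ ≤ ∑ j, (|M i j * N i j| + |M i' j * N i' j|
        + |M' i j * (M'⁻¹)ᵀ i j| + |M' i' j * (M'⁻¹)ᵀ i' j|) := by
        apply Finset.sum_le_sum
        intro j _
        rw [hterm j]
        exact four_term _ _ _ _ (hsum j)
    _ = (∑ j, |M i j * (M⁻¹)ᵀ i j|) + (∑ j, |M i' j * (M⁻¹)ᵀ i' j|)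
        + (∑ j, |M' i j * (M'⁻¹)ᵀ i j|) + (∑ j, |M' i' j * (M'⁻¹)ᵀ i' j|) := by
        rw [← Finset.sum_add_distrib, ← Finset.sum_add_distrib, ← Finset.sum_add_distrib]
    _ ≤ 2 + 2 + 2 + 2 := by
        have b1 := (row_l1_bound M i).trans hcM
        have b2 := (row_l1_bound M i').trans hcM
        have b3 := (row_l1_bound M' i).trans hcM'
        have b4 := (row_l1_bound M' i').trans hcM'
        exact add_le_add (add_le_add (add_le_add b1 b2) b3) b4
    _ = 8 := by norm_num

lemma WH_entry_sq (k : ℕ) (i j : Fin (2^k)) : WH k i j * WH k i j = ((2:ℝ)^k)⁻¹ := by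
  rw [WH]
  rw [div_mul_div_comm, Real.mul_self_sqrt (by positivity), ← pow_add, ← two_mul, pow_mul]
  norm_num

section final
variable {k : ℕ} {ε : ℝ}

lemma inv_final (hε1 : ε^2 ≠ 1) :
    (1 + ε • WH k)⁻¹ = (1 - ε^2)⁻¹ • (1 - ε • WH k) := by
  apply Matrix.inv_eq_right_inv
  rw [Matrix.mul_smul]
  have h4 : (ε • WH k) * (ε • WH k) = (ε^2) • (1 : Matrix (Fin (2^k)) (Fin (2^k)) ℝ) := by
    rw [Matrix.smul_mul, Matrix.mul_smul, WH_mul_self, smul_smul, sq]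
  have expand : (1 + ε • WH k) * (1 - ε • WH k) = (1 - ε^2) • (1 : Matrix (Fin (2^k)) (Fin (2^k)) ℝ) := by
    rw [Matrix.add_mul, Matrix.one_mul, Matrix.mul_sub, Matrix.mul_one, h4, sub_smul, one_smul]
    abel
  rw [expand, smul_smul, inv_mul_cancel₀ (by intro h; apply hε1; linarith [sub_eq_zero.mp h]), one_smul]

lemma transpose_inv_final (hε1 : ε^2 ≠ 1) :
    ((1 + ε • WH k)⁻¹)ᵀ = (1 - ε^2)⁻¹ • (1 - ε • WH k) := by
  rw [inv_final hε1, Matrix.transpose_smul, Matrix.transpose_sub, Matrix.transpose_one,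
    Matrix.transpose_smul, WH_sym]

lemma p_final (hε1 : ε^2 ≠ 1) (i j : Fin (2^k)) :
    (1 + ε • WH k) i j * ((1 + ε • WH k)⁻¹)ᵀ i j
      = (1 - ε^2)⁻¹ * ((if i = j then (1:ℝ) else 0) - ε^2 * ((2:ℝ)^k)⁻¹) := by
  rw [transpose_inv_final hε1]
  have h1 : (1 + ε • WH k) i j = (if i = j then (1:ℝ) else 0) + ε * WH k i j := by
    simp [Matrix.add_apply, Matrix.smul_apply, Matrix.one_apply]
  have h2 : ((1 - ε^2)⁻¹ • (1 - ε • WH k) : Matrix (Fin (2^k)) (Fin (2^k)) ℝ) i j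
      = (1 - ε^2)⁻¹ * ((if i = j then (1:ℝ) else 0) - ε * WH k i j) := by
    simp [Matrix.sub_apply, Matrix.smul_apply, Matrix.one_apply]
  rw [h1, h2]
  have h3 : ((if i = j then (1:ℝ) else 0) + ε * WH k i j)
      * ((if i = j then (1:ℝ) else 0) - ε * WH k i j)
      = (if i = j then (1:ℝ) else 0) - ε^2 * ((2:ℝ)^k)⁻¹ := by
    have hsq := WH_entry_sq k i j
    by_cases h : i = j
    · rw [if_pos h]; linear_combination (-(ε^2)) * hsq
    · rw [if_neg h]; linear_combination (-(ε^2)) * hsq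
  rw [← h3]
  ring
end final

set_option maxHeartbeats 2000000 in
set_option maxHeartbeats 2000000 in
lemma phi_final_lower {k : ℕ} {ε : ℝ} (hk : 4 ≤ (2:ℝ)^k) (hε : 0 < ε) (hε2 : ε < 1/2) :
    ((2:ℝ)^k / 4) * ε^2 * Real.log ((2:ℝ)^k) ≤ phi (1 + ε • WH k) := by
  set nR : ℝ := (2:ℝ)^k with hnR
  have hnR0 : (0:ℝ) < nR := by positivity
  clear_value nR
  have hε2' : ε^2 < 1/4 := by nlinarith
  have hden : (0:ℝ) < 1 - ε^2 := by nlinarith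
  have hε1 : ε^2 ≠ 1 := by nlinarith
  set d : ℝ := (1 - ε^2)⁻¹ * (1 - ε^2 * nR⁻¹) with hd
  set z : ℝ := (1 - ε^2)⁻¹ * (0 - ε^2 * nR⁻¹) with hz
  clear_value d z
  have hphi : phi (1 + ε • WH k) = nR * nl d + nR * (nR - 1) * nl z := by
    rw [phi]
    have hterm : ∀ i j : Fin (2^k), nl ((1 + ε • WH k) i j * ((1 + ε • WH k)⁻¹)ᵀ i j)
        = if i = j then nl d else nl z := by
      intro i j
      rw [p_final hε1 i j, ← hnR]
      by_cases h : i = j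
      · rw [if_pos h, if_pos h, hd]
      · rw [if_neg h, if_neg h, hz]
    have hinner : ∀ i : Fin (2^k), ∑ j, (if i = j then nl d else nl z)
        = nl d + (nR - 1) * nl z := by
      intro i
      have : ∀ j : Fin (2^k), (if i = j then nl d else nl z)
          = nl z + (if i = j then nl d - nl z else 0) := by
        intro j; by_cases h : i = j <;> simp [h]
      rw [Finset.sum_congr rfl fun j _ => this j, Finset.sum_add_distrib, Finset.sum_const,
        Finset.sum_ite_eq, Finset.card_univ, Fintype.card_fin]
      simp only [Finset.mem_univ, if_true]
      have hcast : ((2^k : ℕ) : ℝ) = nR := by rw [hnR]; push_cast; ring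
      rw [nsmul_eq_mul, hcast]
      ring
    rw [Finset.sum_congr rfl fun i _ => by
      rw [Finset.sum_congr rfl fun j _ => hterm i j, hinner i]]
    rw [Finset.sum_const, Finset.card_univ, Fintype.card_fin, nsmul_eq_mul]
    have hcast : ((2^k : ℕ) : ℝ) = nR := by rw [hnR]; push_cast; ring
    rw [hcast]; ring
  rw [hphi]
  -- bound the two terms
  have hd1 : (1:ℝ) ≤ d := by
    rw [hd, inv_mul_eq_div, le_div_iff₀ hden]
    have h1 : ε^2 * nR⁻¹ ≤ ε^2 := by
      apply mul_le_of_le_one_right (by positivity)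
      rw [inv_le_one_iff₀]; right; linarith
    linarith
  have hnld : 0 ≤ nl d := by
    rw [nl]
    exact mul_nonneg (by linarith) (Real.log_nonneg hd1)
  set β : ℝ := (1 - ε^2)⁻¹ * (ε^2 * nR⁻¹) with hβ
  clear_value β
  have hβ0 : 0 < β := by rw [hβ]; positivity
  have hzβ : z = -β := by rw [hz, hβ]; ring
  have hβle : β ≤ 2 / nR := by
    rw [hβ]
    have h1 : (1 - ε^2)⁻¹ ≤ 2 := by
      rw [inv_le_comm₀ hden (by norm_num)]; nlinarith
    calc (1 - ε^2)⁻¹ * (ε^2 * nR⁻¹) ≤ 2 * (ε^2 * nR⁻¹) := by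
          apply mul_le_mul_of_nonneg_right h1 (by positivity)
      _ ≤ 2 / nR := by
          rw [div_eq_mul_inv]
          have : ε^2 * nR⁻¹ ≤ 1 * nR⁻¹ := by
            apply mul_le_mul_of_nonneg_right (by nlinarith) (by positivity)
          nlinarith [this]
  have hnlz : β * Real.log (nR / 2) ≤ nl z := by
    rw [hzβ, nl_neg, nl]
    have : -(β * Real.log β) = β * (- Real.log β) := by ring
    rw [this]
    apply mul_le_mul_of_nonneg_left _ hβ0.le
    have h2 : Real.log β ≤ Real.log (2 / nR) := by
      apply Real.log_le_log hβ0 hβle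
    have h3 : Real.log (2 / nR) = - Real.log (nR / 2) := by
      rw [← Real.log_inv]; congr 1; field_simp
    linarith
  have hlog2 : Real.log (nR / 2) ≥ (1/2) * Real.log nR := by
    have h4 : Real.log (nR / 2) = Real.log nR - Real.log 2 := by
      rw [Real.log_div (by linarith) (by norm_num)]
    have h5 : Real.log 4 ≤ Real.log nR := Real.log_le_log (by norm_num) hk
    have h6 : Real.log 4 = 2 * Real.log 2 := by
      rw [show (4:ℝ) = 2^2 by norm_num, Real.log_pow]; push_cast; ring
    linarith
  have hlognR : 0 ≤ Real.log nR := Real.log_nonneg (by linarith)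
  have hcoef : (nR / 2) * ε^2 ≤ nR * (nR - 1) * β := by
    rw [hβ]
    have h7 : nR * (nR - 1) * ((1 - ε^2)⁻¹ * (ε^2 * nR⁻¹)) = (nR - 1) * ε^2 * (1 - ε^2)⁻¹ := by
      field_simp
    rw [h7]
    have hmul : (1 - ε^2) * (1 - ε^2)⁻¹ = 1 := mul_inv_cancel₀ hden.ne'
    have h8 : (1:ℝ) ≤ (1 - ε^2)⁻¹ := by nlinarith [hmul, hden, sq_nonneg ε]
    have h9 : nR / 2 ≤ nR - 1 := by linarith
    have hA : (0:ℝ) ≤ (nR - 1) * ε^2 := by nlinarith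
    have hB : (nR - 1) * ε^2 ≤ (nR - 1) * ε^2 * (1 - ε^2)⁻¹ := by
      nlinarith [mul_le_mul_of_nonneg_left h8 hA]
    have hC : nR/2 * ε^2 ≤ (nR - 1) * ε^2 := by
      nlinarith [mul_le_mul_of_nonneg_right h9 (sq_nonneg ε)]
    linarith
  calc (nR / 4) * ε^2 * Real.log nR = ((nR/2) * ε^2) * ((1/2) * Real.log nR) := by ring
    _ ≤ (nR * (nR - 1) * β) * Real.log (nR / 2) := by
        apply mul_le_mul hcoef hlog2 (by linarith [hlognR]) (by nlinarith [hβ0])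
    _ = nR * (nR - 1) * (β * Real.log (nR / 2)) := by ring
    _ ≤ nR * (nR - 1) * nl z := by
        apply mul_le_mul_of_nonneg_left hnlz
        nlinarith
    _ ≤ nR * nl d + nR * (nR - 1) * nl z := by nlinarith [mul_nonneg hnR0.le hnld]

end AuxProof

/-- every `(1+Kε)`-well conditioned linear algebraic algorithm computing
`Id + εF` makes at least `c ε² n log₂ n` steps. -/
theorem lower_bound_eps_sq (K : ℝ) (hK : 0 < K) :
    ∃ c > (0:ℝ), ∃ ε₀ ∈ Set.Ioo (0:ℝ) 1, ∃ n₀ : ℕ,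
      ∀ k : ℕ, n₀ ≤ 2^k → ∀ ε : ℝ, 0 < ε → ε < ε₀ →
        ∀ (m : ℕ) (A : ℕ → Matrix (Fin (2^k)) (Fin (2^k)) ℝ),
          IsAlgorithm m A → A m = 1 + ε • WH k →
          WellConditioned m A (1 + K * ε) →
          c * ε^2 * 2^k * Real.logb 2 (2^k) ≤ m := by

  refine ⟨1/64, by norm_num, 1/(2*(K+1)), ⟨by positivity, by
    rw [div_lt_one (by positivity)]; linarith⟩, 4, ?_⟩
  intro k hk ε hε hεlt m A hAlg hAm hWC
  have hε2 : ε < 1/2 := by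
    have h1 : 1/(2*(K+1)) ≤ 1/2 := by
      apply div_le_div_of_nonneg_left (by norm_num) (by norm_num) (by linarith)
    linarith
  have hKε : 1 + K * ε ≤ 2 := by
    have h1 : K * ε < K * (1/(2*(K+1))) := by
      apply mul_lt_mul_of_pos_left hεlt hK
    have h2 : K * (1/(2*(K+1))) < 1/2 := by
      rw [mul_one_div, div_lt_div_iff₀ (by positivity) (by norm_num)]
      linarith
    linarith
  have hdet : ∀ t ≤ m, IsUnit (A t).det := fun t ht => (hWC t ht).1
  have hcond : ∀ t ≤ m, condNum (A t) ≤ 2 := fun t ht => le_trans (hWC t ht).2 hKε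
  -- telescoping bound on the potential
  have htel : ∀ t, t ≤ m → |phi (A t)| ≤ 8 * t := by
    intro t
    induction t with
    | zero => intro _; rw [hAlg.1, phi_one]; simp
    | succ t ih =>
      intro ht
      have ht' : t ≤ m := by omega
      have hstep := hAlg.2 t (by omega)
      have hb : |phi (A (t+1)) - phi (A t)| ≤ 8 := by
        rcases hstep with hrot | hconst
        · obtain ⟨i, i', θ, hlt, hEq⟩ := hrot
          have hc' : condNum (rotMat i i' θ * A t) ≤ 2 := by
            rw [← hEq]; exact hcond (t+1) ht
          rw [hEq]
          exact phi_rot_bound (ne_of_lt hlt) θ (hdet t ht') (hcond t ht') hc'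
        · rw [phi_constGate (hdet t ht') hconst]
          simp
      have habs : |phi (A (t+1))| ≤ |phi (A t)| + |phi (A (t+1)) - phi (A t)| := by
        calc |phi (A (t+1))| = |phi (A t) + (phi (A (t+1)) - phi (A t))| := by ring_nf
          _ ≤ |phi (A t)| + |phi (A (t+1)) - phi (A t)| := abs_add_le _ _
      calc |phi (A (t+1))| ≤ 8 * t + 8 := by linarith [ih ht', habs]
        _ = 8 * ((t:ℝ) + 1) := by ring
        _ = 8 * ((t+1 : ℕ) : ℝ) := by push_cast; ring
  -- the potential of the output matrix is large
  have hk4 : (4:ℝ) ≤ (2:ℝ)^k := by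
    have : ((4:ℕ):ℝ) ≤ ((2^k : ℕ):ℝ) := Nat.cast_le.mpr hk
    push_cast at this
    linarith
  have hfin := phi_final_lower (k := k) (ε := ε) hk4 hε hε2
  rw [← hAm] at hfin
  have hup : phi (A m) ≤ 8 * m := le_trans (le_abs_self _) (htel m le_rfl)
  have hmain : ((2:ℝ)^k / 4) * ε^2 * Real.log ((2:ℝ)^k) ≤ 8 * m := le_trans hfin hup
  -- convert to logb 2
  have hlog2 : (1/2:ℝ) < Real.log 2 := by
    have := Real.log_two_gt_d9; linarith
  have hL : 0 ≤ Real.log ((2:ℝ)^k) := Real.log_nonneg (by linarith)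
  have hdiv : Real.log ((2:ℝ)^k) / Real.log 2 ≤ 2 * Real.log ((2:ℝ)^k) := by
    rw [div_le_iff₀ (by linarith)]
    nlinarith
  have hgoal : (1/64) * ε^2 * (2:ℝ)^k * Real.logb 2 ((2:ℝ)^k) ≤ m := by
    rw [Real.logb]
    calc (1/64) * ε^2 * (2:ℝ)^k * (Real.log ((2:ℝ)^k) / Real.log 2)
        ≤ (1/64) * ε^2 * (2:ℝ)^k * (2 * Real.log ((2:ℝ)^k)) := by
          apply mul_le_mul_of_nonneg_left hdiv (by positivity)
      _ = (1/32) * (((2:ℝ)^k / 4) * ε^2 * Real.log ((2:ℝ)^k)) * 4 := by ring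
      _ ≤ (1/32) * (8 * m) * 4 := by
          apply mul_le_mul_of_nonneg_right _ (by norm_num)
          apply mul_le_mul_of_nonneg_left hmain (by norm_num)
      _ = m := by ring
  exact hgoal
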